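/- Let K ⊆ ℝⁿ be a compact set with empty interior and let p : ℝⁿ → ℝⁿ be a C¹ map. Then p(K) is a compact set with empty interior. -/

import Mathlib

open Set Metric MeasureTheory

theorem c1_image_compact_empty_interior (n : ℕ)
    (K : Set (EuclideanSpace ℝ (Fin n))) (hK : IsCompact K) (hKi : interior K = ∅)
    (p : EuclideanSpace ℝ (Fin n) → EuclideanSpace ℝ (Fin n)) (hp : ContDiff ℝ 1 p) :
    IsCompact (p '' K) ∧ interior (p '' K) = ∅ := by
  let E := EuclideanSpace ℝ (Fin n)
  have hpc : Continuous p := hp.continuous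
  refine ⟨hK.image hpc, ?_⟩
  by_contra hne
  set U := interior (p '' K) with hU
  have hUo : IsOpen U := isOpen_interior
  have hUne : U.Nonempty := Set.nonempty_iff_ne_empty.2 hne
  have hdiff : ∀ x : E, HasFDerivAt p (fderiv ℝ p x) x := fun x =>
    (hp.differentiable one_ne_zero x).hasFDerivAt
  -- critical and regular parts of K
  set C : Set E := {x ∈ K | (fderiv ℝ p x).det = 0} with hC
  set R : Set E := {x ∈ K | (fderiv ℝ p x).det ≠ 0} with hR
  have hCimg0 : volume (p '' C) = 0 :=
    addHaar_image_eq_zero_of_det_fderivWithin_eq_zero volume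
      (fun x _ => (hdiff x).hasFDerivWithinAt) (fun x hx => hx.2)
  have hCc : IsCompact C := by
    have : IsClosed {x : E | (fderiv ℝ p x).det = 0} :=
      isClosed_eq (ContinuousLinearMap.continuous_det.comp
        (hp.continuous_fderiv one_ne_zero)) continuous_const
    exact hK.inter_right this
  -- around each regular point, p is a partial homeomorphism
  have key : ∀ x : E, x ∈ R → ∃ (e : OpenPartialHomeomorph E E) (ε : ℝ), 0 < ε ∧
      closedBall x ε ⊆ e.source ∧ (e : E → E) = p := by
    intro x hx
    have hsd : HasStrictFDerivAt p (fderiv ℝ p x) x :=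
      (hp.contDiffAt).hasStrictFDerivAt one_ne_zero
    set e' : E ≃L[ℝ] E :=
      ((fderiv ℝ p x).toLinearMap.equivOfDetNeZero hx.2).toContinuousLinearEquiv with he'
    have hcoe : (e' : E →L[ℝ] E) = fderiv ℝ p x := by
      ext v
      rfl
    have hsd' : HasStrictFDerivAt p (e' : E →L[ℝ] E) x := hcoe ▸ hsd
    refine ⟨hsd'.toOpenPartialHomeomorph p, ?_⟩
    have hxs : x ∈ (hsd'.toOpenPartialHomeomorph p).source :=
      hsd'.mem_toOpenPartialHomeomorph_source
    obtain ⟨ε, hε, hball⟩ := Metric.isOpen_iff.1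
      (hsd'.toOpenPartialHomeomorph p).open_source x hxs
    exact ⟨ε / 2, by linarith, (closedBall_subset_ball (by linarith)).trans hball,
      hsd'.toOpenPartialHomeomorph_coe⟩
  choose! e ε hεpos hball hecoe using key
  -- countable subcover of R by balls
  have hRsub : R ⊆ ⋃ x : R, ball (x : E) (ε x) := fun x hx =>
    mem_iUnion.2 ⟨⟨x, hx⟩, mem_ball_self (hεpos x hx)⟩
  obtain ⟨T, hTct, hTeq⟩ := TopologicalSpace.isOpen_iUnion_countable
    (fun x : R => ball (x : E) (ε x)) (fun _ => isOpen_ball)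
  haveI : Countable T := hTct.to_subtype
  -- the closed pieces covering U
  set F : Option T → Set E := fun i => Option.elim i (p '' C)
    (fun t => p '' (K ∩ closedBall (t : E) (ε (t : E)))) with hF
  have hFc : ∀ i, IsClosed (F i) := by
    rintro (_ | t)
    · exact (hCc.image hpc).isClosed
    · exact ((hK.inter_right Metric.isClosed_closedBall).image hpc).isClosed
  have hUcov : U ⊆ ⋃ i, F i := by
    rintro u hu
    obtain ⟨x, hxK, rfl⟩ := interior_subset hu
    by_cases hdet : (fderiv ℝ p x).det = 0
    · exact mem_iUnion.2 ⟨none, mem_image_of_mem p ⟨hxK, hdet⟩⟩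
    · have hxR : x ∈ R := ⟨hxK, hdet⟩
      have : x ∈ ⋃ t ∈ T, ball ((t : R) : E) (ε (t : R)) := by
        rw [hTeq]; exact hRsub hxR
      obtain ⟨t, htT, hxt⟩ := mem_iUnion₂.1 this
      exact mem_iUnion.2 ⟨some ⟨t, htT⟩,
        mem_image_of_mem p ⟨hxK, ball_subset_closedBall hxt⟩⟩
  -- Baire category
  have hGcov : ⋃ i, F i ∪ Uᶜ = univ := by
    apply eq_univ_of_forall
    intro y
    by_cases hy : y ∈ U
    · obtain ⟨i, hi⟩ := mem_iUnion.1 (hUcov hy)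
      exact mem_iUnion.2 ⟨i, Or.inl hi⟩
    · exact mem_iUnion.2 ⟨none, Or.inr hy⟩
  have hdense := dense_iUnion_interior_of_closed
    (f := fun i => F i ∪ Uᶜ) (fun i => (hFc i).union hUo.isClosed_compl) hGcov
  obtain ⟨y, hyd, hyU⟩ := hdense.exists_mem_open hUo hUne
  obtain ⟨i, hyi⟩ := mem_iUnion.1 hyd
  -- W is a nonempty open set inside F i
  set W : Set E := interior (F i ∪ Uᶜ) ∩ U with hW
  have hWo : IsOpen W := isOpen_interior.inter hUo
  have hWne : W.Nonempty := ⟨y, hyi, hyU⟩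
  have hWF : W ⊆ F i := by
    rintro z ⟨hz1, hz2⟩
    rcases interior_subset hz1 with h | h
    · exact h
    · exact absurd hz2 h
  obtain (_ | t) := i
  · -- critical case : W has positive measure but is inside a null set
    have h1 : volume W ≤ 0 := hCimg0 ▸ measure_mono hWF
    have h2 : 0 < volume W := hWo.measure_pos volume hWne
    exact absurd (le_antisymm h1 zero_le) h2.ne'
  · -- regular case : pull W back into K via the inverse map
    set x : E := ((t : R) : E) with hx
    have hxR : (x : E) ∈ R := (t : R).2
    set e₀ := e x hxR with he₀
    have hb : closedBall x (ε x) ⊆ e₀.source := hball x hxR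
    have hec : (e₀ : E → E) = p := hecoe x hxR
    have hWsub : W ⊆ p '' (K ∩ closedBall x (ε x)) := hWF
    have hWtarget : W ⊆ e₀.target := by
      intro w hw
      obtain ⟨z, hz, rfl⟩ := hWsub hw
      have : z ∈ e₀.source := hb hz.2
      have := e₀.map_source this
      rwa [hec] at this
    have hopen : IsOpen (e₀.symm '' W) :=
      OpenPartialHomeomorph.isOpen_image_of_subset_source e₀.symm hWo (by rwa [e₀.symm_source])
    have hne' : (e₀.symm '' W).Nonempty := hWne.image _
    have hsubK : e₀.symm '' W ⊆ K := by
      rintro _ ⟨w, hw, rfl⟩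
      obtain ⟨z, hz, rfl⟩ := hWsub hw
      have hzs : z ∈ e₀.source := hb hz.2
      have : e₀.symm (e₀ z) = z := e₀.left_inv hzs
      rw [hec] at this
      rw [this]
      exact hz.1
    have : e₀.symm '' W ⊆ interior K := hopen.subset_interior_iff.2 hsubK
    rw [hKi] at this
    exact absurd (this hne'.choose_spec) (Set.notMem_empty _)
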